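/- Assume: (a) L·1ₙ = 0, the kernel of L is exactly the span of 1ₙ, and the first row of L is zero (node 1 is a leader with no neighbors); (b) all rᵢ > 0, τ > 0, p > 0, κ₁ ≠ κ₂; (c) 1 is an eigenvalue of A of algebraic multiplicity exactly 2 and every other complex eigenvalue of A has modulus < 1. Let the initial condition z₀ = (x⁰, s⁰, y⁰) satisfy s₁⁰ = 1/r₁ and y₁⁰ = 0. Then the trajectory z_k = A^k z₀ = (x_k, s_k, y_k) satisfies x_k − k·τ·1ₙ → x₁⁰·1ₙ as k → ∞; i.e., every clock converges to the leader's initial time advancing at the nominal rate (r* = 1 and x* = x₁⁰). -/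

import Mathlib

open Matrix Polynomial Filter

/-- The 3n×3n transition matrix of the skewless clock-synchronization algorithm. -/
noncomputable def Amat (n : ℕ) (τ κ₁ κ₂ p : ℝ) (L R : Matrix (Fin n) (Fin n) ℝ) :
    Matrix (Fin n ⊕ Fin n ⊕ Fin n) (Fin n ⊕ Fin n ⊕ Fin n) ℝ :=
  Matrix.fromBlocks 1 (Matrix.fromCols (τ • R) 0)
    (Matrix.fromRows ((-κ₁) • L) ((-p) • L))
    (Matrix.fromBlocks 1 ((-κ₂) • (1 : Matrix (Fin n) (Fin n) ℝ)) 0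
      ((1 - p) • (1 : Matrix (Fin n) (Fin n) ℝ)))

section AuxLemmas

lemma blockMulVec {n : ℕ} {K : Type*} [CommRing K] (τ κ₁ κ₂ p : K) (L R : Matrix (Fin n) (Fin n) K)
    (x s y : Fin n → K) :
    (Matrix.fromBlocks 1 (Matrix.fromCols (τ • R) 0)
      (Matrix.fromRows ((-κ₁) • L) ((-p) • L))
      (Matrix.fromBlocks 1 ((-κ₂) • (1 : Matrix (Fin n) (Fin n) K)) 0
        ((1 - p) • (1 : Matrix (Fin n) (Fin n) K)))) *ᵥ Sum.elim x (Sum.elim s y)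
    = Sum.elim (x + τ • (R *ᵥ s))
        (Sum.elim ((-κ₁) • (L *ᵥ x) + s + (-κ₂) • y) ((-p) • (L *ᵥ x) + (1 - p) • y)) := by
  rw [Matrix.fromBlocks_mulVec, Matrix.fromBlocks_mulVec]
  funext idx
  rcases idx with i | i | i <;>
    simp [Matrix.smul_mulVec, Matrix.neg_mulVec, Sum.elim_comp_inl, Sum.elim_comp_inr,
      Matrix.fromCols_mulVec_sumElim, Matrix.fromRows_mulVec] <;> ring

lemma charpolyEval {ι : Type*} [Fintype ι] [DecidableEq ι] {K : Type*} [CommRing K]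
    (M : Matrix ι ι K) (μ : K) :
    M.charpoly.eval μ = (μ • (1 : Matrix ι ι K) - M).det := by
  have h := RingHom.map_det (Polynomial.evalRingHom μ) (Matrix.charmatrix M)
  rw [Matrix.charpoly, show Polynomial.eval μ (Matrix.charmatrix M).det
      = ((Matrix.charmatrix M).map (Polynomial.evalRingHom μ)).det by
    rw [← RingHom.mapMatrix_apply, ← h]; simp]
  congr 1
  ext i j
  by_cases h : i = j <;>
    simp [h, Matrix.charmatrix_apply_eq, Matrix.charmatrix_apply_ne, Matrix.one_apply,
      Matrix.sub_apply, Matrix.smul_apply]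

lemma chooseMulPowTendsto {μ : ℂ} (h : ‖μ‖ < 1) (m : ℕ) :
    Tendsto (fun k : ℕ => ((k.choose m : ℂ) * μ ^ (k - m))) atTop (nhds 0) := by
  by_cases hμ : μ = 0
  · subst hμ
    apply Tendsto.congr' _ (tendsto_const_nhds (x := (0 : ℂ)))
    filter_upwards [eventually_ge_atTop (m + 1)] with k hk
    rw [zero_pow (by omega), mul_zero]
  · rw [tendsto_zero_iff_norm_tendsto_zero]
    have habs0 : (0 : ℝ) < ‖μ‖ := norm_pos_iff.mpr hμ
    have h1 : Tendsto (fun k : ℕ => ((‖μ‖) ^ m)⁻¹ * ((k : ℝ) ^ m * (‖μ‖) ^ k))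
        atTop (nhds 0) := by
      simpa using
        ((tendsto_pow_const_mul_const_pow_of_abs_lt_one m
          (r := ‖μ‖) (by rwa [abs_of_nonneg habs0.le])).const_mul
          (((‖μ‖) ^ m)⁻¹))
    apply squeeze_zero' (Filter.Eventually.of_forall fun k => norm_nonneg _) _ h1
    filter_upwards [eventually_ge_atTop m] with k hk
    have hfac : (1 : ℝ) ≤ (m.factorial : ℝ) := by exact_mod_cast Nat.factorial_pos m
    have hc : ((k.choose m : ℝ)) ≤ (k : ℝ) ^ m :=
      le_trans (Nat.choose_le_pow_div m k) (div_le_self (by positivity) hfac)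
    have hpow : (‖μ‖) ^ (k - m) = (‖μ‖) ^ k * ((‖μ‖) ^ m)⁻¹ := by
      rw [pow_sub₀ _ habs0.ne' hk]
    rw [norm_mul, norm_pow, Complex.norm_natCast, hpow]
    calc (k.choose m : ℝ) * ((‖μ‖) ^ k * ((‖μ‖) ^ m)⁻¹)
        ≤ (k : ℝ) ^ m * ((‖μ‖) ^ k * ((‖μ‖) ^ m)⁻¹) :=
          mul_le_mul_of_nonneg_right hc (by positivity)
      _ = ((‖μ‖) ^ m)⁻¹ * ((k : ℝ) ^ m * (‖μ‖) ^ k) := by ring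

lemma powTendstoZero {E : Type*} [NormedAddCommGroup E] [NormedSpace ℂ E] [FiniteDimensional ℂ E]
    (g : Module.End ℂ E)
    (heig : ∀ (μ : ℂ) (v : E), v ≠ 0 → g v = μ • v → ‖μ‖ < 1) (v : E) :
    Tendsto (fun k : ℕ => (g ^ k) v) atTop (nhds 0) := by
  classical
  have hv : v ∈ ⨆ μ : ℂ, g.maxGenEigenspace μ := by
    rw [Module.End.iSup_maxGenEigenspace_eq_top]; trivial
  refine Submodule.iSup_induction (motive := fun w => Tendsto (fun k : ℕ => (g ^ k) w) atTop (nhds 0))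
    _ hv (fun μ x hx => ?_) (by simpa using tendsto_const_nhds)
    (fun x y hx hy => by simpa using hx.add hy)
  rcases (Module.End.mem_maxGenEigenspace _ _ _).mp hx with ⟨m, hm⟩
  set N : Module.End ℂ E := g - μ • (1 : Module.End ℂ E) with hN
  by_cases hx0 : x = 0
  · simpa [hx0] using tendsto_const_nhds
  have hfind : ∃ k, (N ^ k) x = 0 := ⟨m, hm⟩
  have hj0 : Nat.find hfind ≠ 0 := by
    intro h
    have h' := Nat.find_spec hfind
    rw [h] at h'; simp at h'; exact hx0 h'
  have hj : (N ^ Nat.find hfind) x = 0 := Nat.find_spec hfind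
  have hvne : (N ^ (Nat.find hfind - 1)) x ≠ 0 :=
    Nat.find_min hfind (Nat.sub_lt (Nat.pos_of_ne_zero hj0) one_pos)
  have hev : g ((N ^ (Nat.find hfind - 1)) x) = μ • ((N ^ (Nat.find hfind - 1)) x) := by
    have h1 : (N ^ ((Nat.find hfind - 1) + 1)) x = 0 := by
      rw [show Nat.find hfind - 1 + 1 = Nat.find hfind by omega]; exact hj
    have h2 : N ((N ^ (Nat.find hfind - 1)) x) = 0 := by
      rw [← Module.End.mul_apply, ← pow_succ']; exact h1
    have h3 : g ((N ^ (Nat.find hfind - 1)) x) - μ • ((N ^ (Nat.find hfind - 1)) x) = 0 := by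
      simpa [hN, LinearMap.sub_apply] using h2
    exact sub_eq_zero.mp h3
  have habs : ‖μ‖ < 1 := heig μ _ hvne hev
  have hcomm : Commute N (μ • (1 : Module.End ℂ E)) := (Commute.one_right N).smul_right μ
  have hgN : g = N + μ • (1 : Module.End ℂ E) := by rw [hN, sub_add_cancel]
  have key : ∀ k, m ≤ k → (g ^ k) x
      = ∑ i ∈ Finset.range m, (((k.choose i : ℂ)) * μ ^ (k - i)) • ((N ^ i) x) := by
    intro k hk
    have h4 : (g ^ k) x = ∑ i ∈ Finset.range (k + 1),
        (((k.choose i : ℂ)) * μ ^ (k - i)) • ((N ^ i) x) := by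
      rw [hgN, hcomm.add_pow, LinearMap.sum_apply]
      refine Finset.sum_congr rfl fun i _ => ?_
      rw [Module.End.mul_apply, Module.End.mul_apply, Module.End.natCast_apply,
        ← Nat.cast_smul_eq_nsmul ℂ, _root_.smul_pow, one_pow, LinearMap.smul_apply,
        Module.End.one_apply, LinearMap.map_smul, LinearMap.map_smul, smul_smul]
      rw [mul_comm]
    rw [h4]
    symm
    apply Finset.sum_subset (Finset.range_subset_range.mpr (by omega))
    intro i hi hni
    simp only [Finset.mem_range] at hi hni
    have : (N ^ i) x = 0 := by
      rw [show i = (i - m) + m by omega, pow_add, Module.End.mul_apply, hm, map_zero]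
    rw [this, smul_zero]
  have hterm : Tendsto (fun k : ℕ => ∑ i ∈ Finset.range m,
      (((k.choose i : ℂ)) * μ ^ (k - i)) • ((N ^ i) x)) atTop (nhds 0) := by
    have := tendsto_finset_sum (Finset.range m)
      (fun i (_ : i ∈ Finset.range m) => (chooseMulPowTendsto habs i).smul_const ((N ^ i) x))
    simpa using this
  refine Tendsto.congr' ?_ hterm
  filter_upwards [eventually_ge_atTop m] with k hk
  exact (key k hk).symm

end AuxLemmas

/-- Leader specialization of Theorem 1: if node 1 is a leader (first row of `L` is zero)
initialized with `s₁⁰ = 1/r₁` and `y₁⁰ = 0`, then every clock converges to the leader's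
initial time advancing at the nominal rate (`r* = 1`, `x* = x₁⁰`). -/
theorem stmt9 (n : ℕ) (hn : 0 < n) (τ κ₁ κ₂ p : ℝ)
    (L : Matrix (Fin n) (Fin n) ℝ) (r : Fin n → ℝ)
    (R : Matrix (Fin n) (Fin n) ℝ) (hR : R = Matrix.diagonal r)
    (hL1 : L *ᵥ (fun _ => (1 : ℝ)) = 0)
    (hker : ∀ v : Fin n → ℝ, L *ᵥ v = 0 → ∃ c : ℝ, v = fun _ => c)
    (hleader : ∀ j : Fin n, L ⟨0, hn⟩ j = 0)
    (hr : ∀ i, 0 < r i) (hτ : 0 < τ) (hp : 0 < p) (hκ : κ₁ ≠ κ₂)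
    (hmult : Polynomial.rootMultiplicity (1 : ℂ)
      ((Amat n τ κ₁ κ₂ p L R).map Complex.ofReal).charpoly = 2)
    (hspec : ∀ μ : ℂ, ((Amat n τ κ₁ κ₂ p L R).map Complex.ofReal).charpoly.IsRoot μ →
      μ ≠ 1 → ‖μ‖ < 1)
    (x0 s0 y0 : Fin n → ℝ)
    (hs0 : s0 ⟨0, hn⟩ = (r ⟨0, hn⟩)⁻¹) (hy0 : y0 ⟨0, hn⟩ = 0)
    (z : ℕ → (Fin n ⊕ Fin n ⊕ Fin n) → ℝ)
    (hz : ∀ k, z k = ((Amat n τ κ₁ κ₂ p L R) ^ k) *ᵥ Sum.elim x0 (Sum.elim s0 y0)) :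
    Tendsto (fun k : ℕ => fun i : Fin n => z k (Sum.inl i) - (k : ℝ) * τ)
      atTop (nhds fun _ => x0 ⟨0, hn⟩) := by
  classical
  subst hR
  set i0 : Fin n := ⟨0, hn⟩ with hi0
  set A : Matrix (Fin n ⊕ Fin n ⊕ Fin n) (Fin n ⊕ Fin n ⊕ Fin n) ℝ :=
    Amat n τ κ₁ κ₂ p L (Matrix.diagonal r) with hA
  set Lc : Matrix (Fin n) (Fin n) ℂ := L.map Complex.ofReal with hLc
  set Bc : Matrix (Fin n ⊕ Fin n ⊕ Fin n) (Fin n ⊕ Fin n ⊕ Fin n) ℂ :=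
    A.map Complex.ofReal with hBc
  -- block action over ℝ
  have hAmul : ∀ x s y : Fin n → ℝ, A *ᵥ Sum.elim x (Sum.elim s y)
      = Sum.elim (x + τ • (Matrix.diagonal r *ᵥ s))
          (Sum.elim ((-κ₁) • (L *ᵥ x) + s + (-κ₂) • y) ((-p) • (L *ᵥ x) + (1 - p) • y)) := by
    intro x s y
    rw [hA]; unfold Amat
    exact blockMulVec τ κ₁ κ₂ p L (Matrix.diagonal r) x s y
  -- complex block form
  have hBform : Bc
      = Matrix.fromBlocks 1 (Matrix.fromCols ((τ:ℂ) • (Matrix.diagonal r).map Complex.ofReal) 0)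
        (Matrix.fromRows ((-(κ₁:ℂ)) • Lc) ((-(p:ℂ)) • Lc))
        (Matrix.fromBlocks 1 ((-(κ₂:ℂ)) • (1 : Matrix (Fin n) (Fin n) ℂ)) 0
          ((1 - (p:ℂ)) • (1 : Matrix (Fin n) (Fin n) ℂ))) := by
    rw [hBc, hA, hLc]; unfold Amat
    ext (i | i | i) (j | j | j) <;> by_cases h : i = j <;>
      simp [Matrix.map_apply, Matrix.one_apply, h, apply_ite]
  have hBmul : ∀ x s y : Fin n → ℂ, Bc *ᵥ Sum.elim x (Sum.elim s y)
      = Sum.elim (x + (τ:ℂ) • ((Matrix.diagonal r).map Complex.ofReal *ᵥ s))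
          (Sum.elim ((-(κ₁:ℂ)) • (Lc *ᵥ x) + s + (-(κ₂:ℂ)) • y)
            ((-(p:ℂ)) • (Lc *ᵥ x) + (1 - (p:ℂ)) • y)) := by
    intro x s y
    rw [hBform]
    exact blockMulVec _ _ _ _ _ _ x s y
  have hsplitC : ∀ vv : (Fin n ⊕ Fin n ⊕ Fin n) → ℂ,
      vv = Sum.elim (fun i => vv (Sum.inl i))
        (Sum.elim (fun i => vv (Sum.inr (Sum.inl i))) (fun i => vv (Sum.inr (Sum.inr i)))) := by
    intro vv; funext idx; rcases idx with i | i | i <;> rfl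
  have hBmul' : ∀ vv : (Fin n ⊕ Fin n ⊕ Fin n) → ℂ, Bc *ᵥ vv
      = Sum.elim ((fun i => vv (Sum.inl i))
            + (τ:ℂ) • ((Matrix.diagonal r).map Complex.ofReal *ᵥ fun i => vv (Sum.inr (Sum.inl i))))
          (Sum.elim ((-(κ₁:ℂ)) • (Lc *ᵥ fun i => vv (Sum.inl i))
              + (fun i => vv (Sum.inr (Sum.inl i)))
              + (-(κ₂:ℂ)) • fun i => vv (Sum.inr (Sum.inr i)))
            ((-(p:ℂ)) • (Lc *ᵥ fun i => vv (Sum.inl i))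
              + (1 - (p:ℂ)) • fun i => vv (Sum.inr (Sum.inr i)))) := by
    intro vv
    conv_lhs => rw [hsplitC vv]
    exact hBmul _ _ _
  -- complex kernel of L
  have hkerC : ∀ w : Fin n → ℂ, Lc *ᵥ w = 0 → ∃ c : ℂ, w = fun _ => c := by
    intro w hw
    have hre : L *ᵥ (fun i => (w i).re) = 0 := by
      funext j
      have hj : (∑ i, (L j i : ℂ) * w i) = 0 := by
        simpa [Matrix.mulVec, dotProduct, hLc, Matrix.map_apply] using congrFun hw j
      have := congrArg Complex.re hj
      simpa [Complex.re_sum, Complex.re_ofReal_mul, Matrix.mulVec, dotProduct] using this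
    have him : L *ᵥ (fun i => (w i).im) = 0 := by
      funext j
      have hj : (∑ i, (L j i : ℂ) * w i) = 0 := by
        simpa [Matrix.mulVec, dotProduct, hLc, Matrix.map_apply] using congrFun hw j
      have := congrArg Complex.im hj
      simpa [Complex.im_sum, Complex.im_ofReal_mul, Matrix.mulVec, dotProduct] using this
    obtain ⟨c, hc⟩ := hker _ hre
    obtain ⟨d, hd⟩ := hker _ him
    refine ⟨⟨c, d⟩, ?_⟩
    funext i
    apply Complex.ext
    · simpa using congrFun hc i
    · simpa using congrFun hd i
  -- leader row over ℂ
  have hleadC : ∀ x : Fin n → ℂ, (Lc *ᵥ x) i0 = 0 := by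
    intro x
    simp [hLc, Matrix.mulVec, dotProduct, Matrix.map_apply, hleader]
  have hτC : (τ:ℂ) ≠ 0 := Complex.ofReal_ne_zero.mpr hτ.ne'
  have hpC : (p:ℂ) ≠ 0 := Complex.ofReal_ne_zero.mpr hp.ne'
  have hκC : (κ₁:ℂ) - (κ₂:ℂ) ≠ 0 := sub_ne_zero.mpr (by exact_mod_cast hκ)
  -- fixed vectors of Bc with vanishing leader x-coordinate vanish
  have hone : ∀ vv : (Fin n ⊕ Fin n ⊕ Fin n) → ℂ,
      Bc *ᵥ vv = vv → vv (Sum.inl i0) = 0 → vv = 0 := by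
    intro vv hbv h0
    rw [hBmul' vv] at hbv
    have hs' : ∀ i, vv (Sum.inr (Sum.inl i)) = 0 := by
      intro i
      have h := congrFun hbv (Sum.inl i)
      simp only [Sum.elim_inl, Pi.add_apply, Pi.smul_apply, smul_eq_mul] at h
      have h2 : (τ:ℂ) * (((Matrix.diagonal r).map Complex.ofReal *ᵥ
          fun i => vv (Sum.inr (Sum.inl i))) i) = 0 := by
        have := add_eq_left.mp h
        exact this
      rw [Matrix.diagonal_map (by simp), Matrix.mulVec_diagonal] at h2
      have hrC : ((r i : ℝ) : ℂ) ≠ 0 := Complex.ofReal_ne_zero.mpr (hr i).ne'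
      simpa [mul_eq_zero, hτC, hrC] using h2
    have hLxy : ∀ i, (Lc *ᵥ fun j => vv (Sum.inl j)) i = - vv (Sum.inr (Sum.inr i)) := by
      intro i
      have h := congrFun hbv (Sum.inr (Sum.inr i))
      simp only [Sum.elim_inr, Pi.add_apply, Pi.smul_apply, smul_eq_mul] at h
      have h2 : (p:ℂ) * ((Lc *ᵥ fun j => vv (Sum.inl j)) i + vv (Sum.inr (Sum.inr i))) = 0 := by
        linear_combination -h
      have h3 := (mul_eq_zero.mp h2).resolve_left hpC
      linear_combination h3
    have hy' : ∀ i, vv (Sum.inr (Sum.inr i)) = 0 := by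
      intro i
      have h := congrFun hbv (Sum.inr (Sum.inl i))
      simp only [Sum.elim_inr, Sum.elim_inl, Pi.add_apply, Pi.smul_apply, smul_eq_mul] at h
      rw [hLxy i] at h
      have h2 : ((κ₁:ℂ) - (κ₂:ℂ)) * vv (Sum.inr (Sum.inr i)) = 0 := by linear_combination h
      exact (mul_eq_zero.mp h2).resolve_left hκC
    have hLx0 : Lc *ᵥ (fun j => vv (Sum.inl j)) = 0 := by
      funext i
      rw [hLxy i, hy' i, neg_zero]
      rfl
    obtain ⟨c, hc⟩ := hkerC _ hLx0
    have hc0 : c = 0 := by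
      have := congrFun hc i0
      rw [← this, h0]
    funext idx
    rcases idx with i | i | i
    · have := congrFun hc i
      show vv (Sum.inl i) = 0
      rw [this, hc0]
    · exact hs' i
    · exact hy' i
  -- the invariant subspace of vectors vanishing at the leader coordinates
  set V : Submodule ℂ ((Fin n ⊕ Fin n ⊕ Fin n) → ℂ) :=
    LinearMap.ker (LinearMap.proj (R := ℂ) (Sum.inl i0)) ⊓
      (LinearMap.ker (LinearMap.proj (R := ℂ) (Sum.inr (Sum.inl i0))) ⊓
        LinearMap.ker (LinearMap.proj (R := ℂ) (Sum.inr (Sum.inr i0)))) with hVdef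
  have hmemV : ∀ vv : (Fin n ⊕ Fin n ⊕ Fin n) → ℂ, vv ∈ V ↔
      (vv (Sum.inl i0) = 0 ∧ vv (Sum.inr (Sum.inl i0)) = 0 ∧ vv (Sum.inr (Sum.inr i0)) = 0) := by
    intro vv
    simp [hVdef, Submodule.mem_inf, LinearMap.mem_ker, LinearMap.proj_apply]
  have hVinv : ∀ vv ∈ V, Matrix.mulVecLin Bc vv ∈ V := by
    intro vv hvv
    obtain ⟨h1, h2, h3⟩ := (hmemV vv).mp hvv
    refine (hmemV _).mpr ⟨?_, ?_, ?_⟩ <;>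
      rw [Matrix.mulVecLin_apply, hBmul' vv]
    · simp only [Sum.elim_inl, Pi.add_apply, Pi.smul_apply, smul_eq_mul]
      rw [Matrix.diagonal_map (by simp), Matrix.mulVec_diagonal, h2]
      simp [h1]
    · simp only [Sum.elim_inr, Sum.elim_inl, Pi.add_apply, Pi.smul_apply, smul_eq_mul]
      rw [hleadC, h2, h3]
      ring
    · simp only [Sum.elim_inr, Pi.add_apply, Pi.smul_apply, smul_eq_mul]
      rw [hleadC, h3]
      ring
  set g : Module.End ℂ V := (Matrix.mulVecLin Bc).restrict hVinv with hg
  have heigV : ∀ (μ : ℂ) (w : V), w ≠ 0 → g w = μ • w → ‖μ‖ < 1 := by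
    intro μ w hw hgw
    have hval : Bc *ᵥ (w : (Fin n ⊕ Fin n ⊕ Fin n) → ℂ) = μ • (w : (Fin n ⊕ Fin n ⊕ Fin n) → ℂ) := by
      have h := congrArg Subtype.val hgw
      rw [hg] at h
      simpa [LinearMap.restrict_coe_apply, Matrix.mulVecLin_apply] using h
    have hne : (w : (Fin n ⊕ Fin n ⊕ Fin n) → ℂ) ≠ 0 := by
      intro h
      exact hw (by ext1; simp [h])
    by_cases hμ : μ = 1
    · exfalso
      subst hμ
      rw [one_smul] at hval
      exact hne (hone _ hval ((hmemV _).mp w.2).1)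
    · refine hspec μ ?_ hμ
      have hdet : (μ • (1 : Matrix (Fin n ⊕ Fin n ⊕ Fin n) (Fin n ⊕ Fin n ⊕ Fin n) ℂ) - Bc).det
          = 0 := by
        rw [← Matrix.exists_mulVec_eq_zero_iff]
        exact ⟨_, hne, by
          rw [Matrix.sub_mulVec, Matrix.smul_mulVec, Matrix.one_mulVec, hval, sub_self]⟩
      show Bc.charpoly.eval μ = 0
      rw [charpolyEval]
      exact hdet
  -- real fixed/quasi-fixed directions
  set uR : (Fin n ⊕ Fin n ⊕ Fin n) → ℝ := Sum.elim (fun _ => (1:ℝ)) (Sum.elim 0 0) with huR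
  set zR : (Fin n ⊕ Fin n ⊕ Fin n) → ℝ :=
    Sum.elim (fun _ => (1:ℝ)) (Sum.elim (fun i => (r i)⁻¹) 0) with hzR
  have hAu : A *ᵥ uR = uR := by
    rw [huR, hAmul, hL1]
    funext idx
    rcases idx with i | i | i <;> simp
  have hAz : A *ᵥ zR = zR + τ • uR := by
    rw [hzR, hAmul, hL1]
    funext idx
    rcases idx with i | i | i <;>
      simp [huR, Matrix.mulVec_diagonal, mul_inv_cancel₀ (hr i).ne']
  have hpu : ∀ k : ℕ, A ^ k *ᵥ uR = uR := by
    intro k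
    induction k with
    | zero => simp
    | succ k ih => rw [pow_succ, ← Matrix.mulVec_mulVec, hAu, ih]
  have hpz : ∀ k : ℕ, A ^ k *ᵥ zR = zR + ((k:ℝ) * τ) • uR := by
    intro k
    induction k with
    | zero => simp
    | succ k ih =>
      rw [pow_succ, ← Matrix.mulVec_mulVec, hAz, Matrix.mulVec_add, Matrix.mulVec_smul, hpu, ih]
      have hsc : (k:ℝ) * τ + τ = ((k+1 : ℕ) : ℝ) * τ := by push_cast; ring
      rw [add_assoc, ← add_smul, hsc]
  set z0 : (Fin n ⊕ Fin n ⊕ Fin n) → ℝ := Sum.elim x0 (Sum.elim s0 y0) with hz0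
  set w0 : (Fin n ⊕ Fin n ⊕ Fin n) → ℝ := z0 - ((x0 i0 - 1) • uR + zR) with hw0
  have hdecomp : z0 = (x0 i0 - 1) • uR + zR + w0 := by
    rw [hw0, add_sub_cancel]
  have hzk : ∀ (k : ℕ) (i : Fin n),
      z k (Sum.inl i) - (k:ℝ) * τ = x0 i0 + (A ^ k *ᵥ w0) (Sum.inl i) := by
    intro k i
    rw [hz k]
    have hstep : A ^ k *ᵥ z0 = (x0 i0 - 1) • uR + (zR + ((k:ℝ) * τ) • uR) + A ^ k *ᵥ w0 := by
      conv_lhs => rw [hdecomp]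
      rw [Matrix.mulVec_add, Matrix.mulVec_add, Matrix.mulVec_smul, hpu, hpz]
    rw [hstep]
    simp only [Pi.add_apply, Pi.smul_apply, huR, hzR, Sum.elim_inl, smul_eq_mul]
    ring
  -- complexified w0
  set w0c : (Fin n ⊕ Fin n ⊕ Fin n) → ℂ := fun idx => ((w0 idx : ℝ) : ℂ) with hw0c
  have hw0V : w0c ∈ V := by
    refine (hmemV _).mpr ⟨?_, ?_, ?_⟩
    · have : w0 (Sum.inl i0) = 0 := by
        simp only [hw0, hz0, Pi.sub_apply, Pi.add_apply, Pi.smul_apply, huR, hzR,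
          Sum.elim_inl, smul_eq_mul]
        ring
      simp [hw0c, this]
    · have : w0 (Sum.inr (Sum.inl i0)) = 0 := by
        simp only [hw0, hz0, Pi.sub_apply, Pi.add_apply, Pi.smul_apply, huR, hzR,
          Sum.elim_inr, Sum.elim_inl, smul_eq_mul, Pi.zero_apply]
        rw [hs0]
        ring
      simp [hw0c, this]
    · have : w0 (Sum.inr (Sum.inr i0)) = 0 := by
        simp only [hw0, hz0, Pi.sub_apply, Pi.add_apply, Pi.smul_apply, huR, hzR,
          Sum.elim_inr, smul_eq_mul, Pi.zero_apply]
        rw [hy0]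
        ring
      simp [hw0c, this]
  -- the cast intertwines the real and complex dynamics
  have hcast : ∀ vR : (Fin n ⊕ Fin n ⊕ Fin n) → ℝ,
      Bc *ᵥ (fun idx => ((vR idx : ℝ) : ℂ)) = fun idx => (((A *ᵥ vR) idx : ℝ) : ℂ) := by
    intro vR
    funext idx
    simp only [hBc, Matrix.mulVec, dotProduct, Matrix.map_apply]
    push_cast
    rfl
  have hlink : ∀ k : ℕ, ((g ^ k) ⟨w0c, hw0V⟩ : (Fin n ⊕ Fin n ⊕ Fin n) → ℂ)
      = fun idx => (((A ^ k *ᵥ w0) idx : ℝ) : ℂ) := by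
    intro k
    induction k with
    | zero => funext idx; simp [hw0c]
    | succ k ih =>
      have h1 : (g ^ (k+1)) ⟨w0c, hw0V⟩ = g ((g ^ k) ⟨w0c, hw0V⟩) := by
        rw [pow_succ']; rfl
      rw [h1]
      have h2 : (g ((g ^ k) ⟨w0c, hw0V⟩) : (Fin n ⊕ Fin n ⊕ Fin n) → ℂ)
          = Bc *ᵥ ((g ^ k) ⟨w0c, hw0V⟩ : (Fin n ⊕ Fin n ⊕ Fin n) → ℂ) := by
        rw [hg]
        simp [LinearMap.restrict_coe_apply, Matrix.mulVecLin_apply]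
      rw [h2, ih, hcast, Matrix.mulVec_mulVec, ← pow_succ']
  -- convergence
  have hconvV : Tendsto (fun k : ℕ => (g ^ k) ⟨w0c, hw0V⟩) atTop (nhds 0) :=
    powTendstoZero g heigV _
  have hcoe : Tendsto (fun k : ℕ => ((g ^ k) ⟨w0c, hw0V⟩ : (Fin n ⊕ Fin n ⊕ Fin n) → ℂ))
      atTop (nhds 0) := by
    have hcont : Continuous (Subtype.val : V → ((Fin n ⊕ Fin n ⊕ Fin n) → ℂ)) :=
      continuous_subtype_val
    simpa [Function.comp_def] using (hcont.tendsto 0).comp hconvV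
  have hidx : ∀ idx, Tendsto (fun k : ℕ => (A ^ k *ᵥ w0) idx) atTop (nhds 0) := by
    intro idx
    have h1 : Tendsto (fun k : ℕ => (((A ^ k *ᵥ w0) idx : ℝ) : ℂ)) atTop (nhds 0) := by
      have h2 := (tendsto_pi_nhds.mp hcoe) idx
      refine Tendsto.congr (fun k => ?_) (by simpa using h2)
      rw [hlink k]
    have h3 := (Complex.continuous_re.tendsto 0).comp h1
    simpa [Function.comp_def] using h3
  rw [tendsto_pi_nhds]
  intro i
  have h4 : Tendsto (fun k : ℕ => x0 i0 + (A ^ k *ᵥ w0) (Sum.inl i)) atTop (nhds (x0 i0)) := by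
    simpa using (hidx (Sum.inl i)).const_add (x0 i0)
  refine Tendsto.congr (fun k => (hzk k i).symm) h4
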